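/- arXiv:2602.17197 — 5 statements merged into one kernel-verified Lean document; each statement's English description precedes it below -/
import Mathlib

section
/- Let A be a finite-dimensional k-algebra and e an idempotent. A module M with Hom_A(eA, M) = 0 is Ext-projective in the subcategory (eA)^⊥ (i.e., Ext¹_A(M, X) = 0 for all X ∈ (eA)^⊥) if and only if M ≅ P/PeA for some finitely generated projective A-module P. -/
open MulOpposite

section Aux

variable {A : Type} [Ring A]

/-- If `e • w = 0` for all `w`, every hom from `eA` is zero. -/
lemma aux_hom_zero (e : A) (he : e * e = e) {W : Type} [AddCommGroup W] [Module Aᵐᵒᵖ W]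
    (hW : ∀ w : W, (op e) • w = 0)
    (g : (Submodule.span Aᵐᵒᵖ ({e} : Set A)) →ₗ[Aᵐᵒᵖ] W) : g = 0 := by
  have hemem : e ∈ Submodule.span Aᵐᵒᵖ ({e} : Set A) :=
    Submodule.mem_span_singleton_self e
  have hge : g ⟨e, hemem⟩ = 0 := by
    have h1 : (⟨e, hemem⟩ : Submodule.span Aᵐᵒᵖ ({e} : Set A)) = (op e) • ⟨e, hemem⟩ := by
      apply Subtype.ext
      show e = (op e) • e
      show e = e * e
      exact he.symm
    rw [h1, map_smul, hW]
  ext ⟨x, hx⟩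
  obtain ⟨a, ha⟩ := Submodule.mem_span_singleton.1 hx
  have hxe : (⟨x, hx⟩ : Submodule.span Aᵐᵒᵖ ({e} : Set A)) = a • ⟨e, hemem⟩ := by
    apply Subtype.ext
    exact ha.symm
  rw [hxe, map_smul, hge, smul_zero]
  rfl

/-- If every hom from `eA` to `W` is zero, then `W·e = 0`. -/
lemma aux_smul_zero (e : A) {W : Type} [AddCommGroup W] [Module Aᵐᵒᵖ W]
    (hW : ∀ g : (Submodule.span Aᵐᵒᵖ ({e} : Set A)) →ₗ[Aᵐᵒᵖ] W, g = 0)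
    (w : W) : (op e) • w = 0 := by
  let φ : (Submodule.span Aᵐᵒᵖ ({e} : Set A)) →ₗ[Aᵐᵒᵖ] W :=
    { toFun := fun x => op (x : A) • w
      map_add' := by
        intro x y
        show op ((x : A) + (y : A)) • w = _
        rw [op_add, add_smul]
      map_smul' := by
        intro r x
        show op ((x : A) * unop r) • w = r • (op (x : A) • w)
        rw [op_mul, op_unop, mul_smul] }
  have h0 := hW φ
  have h2 : φ ⟨e, Submodule.mem_span_singleton_self e⟩ = 0 := by rw [h0]; rfl
  exact h2

/-- Composing complements: if `L ⊕ C = F` and `U ⊕ V = L`, then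
`U ⊕ (V ⊔ C) = F`. -/
lemma aux_isCompl {F : Type} [AddCommGroup F] {R : Type} [Ring R] [Module R F]
    {L C : Submodule R F} (hLC : IsCompl L C) {U V : Submodule R ↥L} (hUV : IsCompl U V) :
    IsCompl (U.map L.subtype) (V.map L.subtype ⊔ C) := by
  constructor
  · rw [Submodule.disjoint_def]
    rintro x hxU hx2
    obtain ⟨u, huU, rfl⟩ := hxU
    obtain ⟨v, hv, c, hc, hvc⟩ := Submodule.mem_sup.1 hx2
    obtain ⟨v', hv'V, rfl⟩ := hv
    simp only [Submodule.subtype_apply] at hvc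
    have hcL : c ∈ L := by
      have : c = (u : F) - (v' : F) := by
        rw [← hvc]; abel
      rw [this]
      exact sub_mem u.2 v'.2
    have hc0 : c = 0 := (Submodule.disjoint_def.1 hLC.disjoint) c hcL hc
    have huv : (u : F) = (v' : F) := by
      rw [hc0, add_zero] at hvc; exact hvc.symm
    have huv' : u = v' := Subtype.ext huv
    have : u ∈ U ⊓ V := ⟨huU, huv' ▸ hv'V⟩
    rw [hUV.inf_eq_bot] at this
    rw [this]
    simp
  · rw [codisjoint_iff, ← sup_assoc, ← Submodule.map_sup,
      codisjoint_iff.1 hUV.codisjoint, Submodule.map_top, Submodule.range_subtype,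
      codisjoint_iff.1 hLC.codisjoint]

end Aux

set_option maxHeartbeats 1600000

/-- Let `A` be a finite-dimensional `k`-algebra and `e` an idempotent.  A
finitely generated right `A`-module `M` with `Hom_A(eA, M) = 0` is Ext-projective in the
subcategory `(eA)^⊥` (every short exact sequence `0 → X → Y → M → 0` with `X ∈ (eA)^⊥` splits)
if and only if `M ≅ P/PeA` for some finitely generated projective right `A`-module `P`. -/
theorem stmt3 (k A : Type) [Field k] [Ring A] [Algebra k A] [FiniteDimensional k A]
    (e : A) (he : e * e = e)
    (M : Type) [AddCommGroup M] [Module Aᵐᵒᵖ M] [Module.Finite Aᵐᵒᵖ M]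
    (hM : ∀ g : (Submodule.span Aᵐᵒᵖ ({e} : Set A)) →ₗ[Aᵐᵒᵖ] M, g = 0) :
    (∀ (X : Type) [AddCommGroup X] [Module Aᵐᵒᵖ X], Module.Finite Aᵐᵒᵖ X →
      (∀ g : (Submodule.span Aᵐᵒᵖ ({e} : Set A)) →ₗ[Aᵐᵒᵖ] X, g = 0) →
      ∀ (Y : Type) [AddCommGroup Y] [Module Aᵐᵒᵖ Y]
        (f : X →ₗ[Aᵐᵒᵖ] Y) (g : Y →ₗ[Aᵐᵒᵖ] M),
        Function.Injective f → Function.Surjective g → Function.Exact f g →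
        ∃ s : M →ₗ[Aᵐᵒᵖ] Y, g ∘ₗ s = LinearMap.id) ↔
    (∃ P : ModuleCat Aᵐᵒᵖ, Module.Projective Aᵐᵒᵖ P ∧ Module.Finite Aᵐᵒᵖ P ∧
      Nonempty (M ≃ₗ[Aᵐᵒᵖ]
        (P ⧸ Submodule.span Aᵐᵒᵖ (Set.range fun p : P => (op e) • p)))) := by
  have hee : (op e : Aᵐᵒᵖ) * op e = op e := by rw [← op_mul, he]
  have hMe : ∀ m : M, (op e) • m = 0 := aux_smul_zero e hM
  constructor
  · -- forward direction
    intro hExt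
    haveI hNR : IsNoetherianRing Aᵐᵒᵖ := isNoetherian_of_tower k inferInstance
    haveI hAR : IsArtinianRing Aᵐᵒᵖ := isArtinian_of_tower k inferInstance
    obtain ⟨n, f₀, hf₀⟩ := Module.Finite.exists_fin' Aᵐᵒᵖ M
    -- the set of direct summands of the free module which surject onto M
    set 𝒮 : Set (Submodule Aᵐᵒᵖ (Fin n → Aᵐᵒᵖ)) :=
      {L | Submodule.map f₀ L = ⊤ ∧ ∃ C, IsCompl L C} with h𝒮
    have htop : (⊤ : Submodule Aᵐᵒᵖ (Fin n → Aᵐᵒᵖ)) ∈ 𝒮 := by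
      refine ⟨?_, ⟨⊥, isCompl_top_bot⟩⟩
      rw [Submodule.map_top, LinearMap.range_eq_top.2 hf₀]
    obtain ⟨L, hL𝒮, hLmin⟩ := IsArtinian.set_has_minimal 𝒮 ⟨⊤, htop⟩
    obtain ⟨hLmap, C, hC⟩ := hL𝒮
    have hproj : Module.Projective Aᵐᵒᵖ ↥L :=
      Module.Projective.of_split L.subtype (L.linearProjOfIsCompl C hC)
        (Submodule.linearProjOfIsCompl_comp_subtype hC)
    set π : ↥L →ₗ[Aᵐᵒᵖ] M := f₀.comp L.subtype with hπdef
    have hπ : Function.Surjective π := by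
      intro m
      have : m ∈ Submodule.map f₀ L := by rw [hLmap]; trivial
      obtain ⟨x, hxL, hxm⟩ := this
      exact ⟨⟨x, hxL⟩, hxm⟩
    set T : Submodule Aᵐᵒᵖ ↥L :=
      Submodule.span Aᵐᵒᵖ (Set.range fun p : ↥L => (op e) • p) with hTdef
    have hT : T ≤ LinearMap.ker π := by
      rw [Submodule.span_le]
      rintro _ ⟨p, rfl⟩
      show π ((op e) • p) = 0
      rw [map_smul, hMe]
    set gbar : (↥L ⧸ T) →ₗ[Aᵐᵒᵖ] M := T.liftQ π hT with hgdef
    have hgmk : ∀ p : ↥L, gbar (T.mkQ p) = π p := fun p => rfl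
    have hgsurj : Function.Surjective gbar := by
      intro m; obtain ⟨p, rfl⟩ := hπ m; exact ⟨T.mkQ p, rfl⟩
    clear_value gbar
    have hNe : ∀ x : ↥L ⧸ T, (op e) • x = 0 := by
      intro x
      obtain ⟨p, rfl⟩ := T.mkQ_surjective x
      rw [← map_smul]
      rw [Submodule.mkQ_apply, Submodule.Quotient.mk_eq_zero]
      exact Submodule.subset_span ⟨p, rfl⟩
    set K := LinearMap.ker gbar with hKdef
    have hK0 : ∀ w : ↥K, (op e) • w = 0 := by
      intro w
      apply Subtype.ext
      show (op e) • (w : ↥L ⧸ T) = 0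
      exact hNe _
    haveI hKfin : Module.Finite Aᵐᵒᵖ ↥K := inferInstance
    obtain ⟨s, hs⟩ := hExt ↥K hKfin (aux_hom_zero e he hK0) (↥L ⧸ T)
      K.subtype gbar K.injective_subtype hgsurj
      (by rw [LinearMap.exact_iff, Submodule.range_subtype])
    have hgs : ∀ m : M, gbar (s m) = m := fun m => DFunLike.congr_fun hs m
    have hsinj : Function.Injective s := Function.LeftInverse.injective hgs
    -- surjectivity of s
    set L'' : Submodule Aᵐᵒᵖ ↥L := (LinearMap.range s).comap T.mkQ with hL''def
    set π'' : ↥L'' →ₗ[Aᵐᵒᵖ] M := π.comp L''.subtype with hπ''def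
    have hπ'' : Function.Surjective π'' := by
      intro m
      obtain ⟨p, hp⟩ := T.mkQ_surjective (s m)
      have hpL'' : p ∈ L'' := by
        show T.mkQ p ∈ LinearMap.range s
        rw [hp]; exact ⟨m, rfl⟩
      refine ⟨⟨p, hpL''⟩, ?_⟩
      show π p = m
      rw [← hgmk, hp, hgs]
    obtain ⟨h₀, hh₀⟩ := Module.projective_lifting_property π'' π hπ''
    set h : ↥L →ₗ[Aᵐᵒᵖ] ↥L := L''.subtype.comp h₀ with hhdef
    have hπh : ∀ p, π (h p) = π p := by
      intro p
      have := DFunLike.congr_fun hh₀ p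
      exact this
    have hπhj : ∀ j p, π ((h ^ j) p) = π p := by
      intro j
      induction j with
      | zero => intro p; rfl
      | succ j ih =>
        intro p
        rw [pow_succ, Module.End.mul_apply, ih, hπh]
    obtain ⟨m0, hm0⟩ := Filter.eventually_atTop.1
      (LinearMap.eventually_isCompl_ker_pow_range_pow h)
    set m := max m0 1 with hmdef
    have hcompl : IsCompl (LinearMap.ker (h ^ m)) (LinearMap.range (h ^ m)) :=
      hm0 m (le_max_left _ _)
    set P₁ : Submodule Aᵐᵒᵖ ↥L := LinearMap.range (h ^ m) with hP₁def
    set L₁ := P₁.map L.subtype with hL₁def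
    have hL₁𝒮 : L₁ ∈ 𝒮 := by
      constructor
      · rw [eq_top_iff]
        rintro x -
        obtain ⟨p, rfl⟩ := hπ x
        rw [← hπhj m p]
        refine ⟨((h ^ m) p : ↥L), ⟨(h ^ m) p, ⟨p, rfl⟩, rfl⟩, rfl⟩
      · exact ⟨(LinearMap.ker (h ^ m)).map L.subtype ⊔ C,
          aux_isCompl hC hcompl.symm⟩
    have hL₁le : L₁ ≤ L := by
      rintro _ ⟨p, -, rfl⟩
      exact p.2
    have hL₁eq : L₁ = L := by
      rcases hL₁le.lt_or_eq with hlt | heq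
      · exact absurd hlt (hLmin L₁ hL₁𝒮)
      · exact heq
    have hP₁top : P₁ = ⊤ := by
      apply Submodule.map_injective_of_injective L.injective_subtype
      rw [← hL₁def, hL₁eq, Submodule.map_top, Submodule.range_subtype]
    have hrangeh : LinearMap.range h = ⊤ := by
      rw [eq_top_iff, ← hP₁top]
      obtain ⟨m', hm'⟩ : ∃ m', m = m' + 1 :=
        ⟨m - 1, (Nat.succ_pred_eq_of_pos (lt_of_lt_of_le zero_lt_one (le_max_right m0 1))).symm⟩
      rw [hP₁def, hm', pow_succ']
      rintro _ ⟨p, rfl⟩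
      exact ⟨(h ^ m') p, rfl⟩
    have hL''top : L'' = ⊤ := by
      rw [eq_top_iff]
      intro p _
      have : h p ∈ L'' := (h₀ p).2
      have hp' : p ∈ LinearMap.range h := by rw [hrangeh]; trivial
      obtain ⟨q, rfl⟩ := hp'
      exact (h₀ q).2
    have hssurj : Function.Surjective s := by
      intro x
      obtain ⟨p, rfl⟩ := T.mkQ_surjective x
      have : p ∈ L'' := by rw [hL''top]; trivial
      exact this
    haveI : Module.Finite Aᵐᵒᵖ ↥L := inferInstance
    refine ⟨ModuleCat.of Aᵐᵒᵖ (ULift ↥L), ?_, ?_, ?_⟩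
    · exact Module.Projective.of_equiv (ULift.moduleEquiv (R := Aᵐᵒᵖ) (M := ↥L)).symm
    · exact Module.Finite.equiv (ULift.moduleEquiv (R := Aᵐᵒᵖ) (M := ↥L)).symm
    · set μ := (ULift.moduleEquiv (R := Aᵐᵒᵖ) (M := ↥L)).symm with hμdef
      have hmap : T.map (μ : ↥L →ₗ[Aᵐᵒᵖ] ULift ↥L) =
          Submodule.span Aᵐᵒᵖ (Set.range fun p : ULift ↥L => (op e) • p) := by
        rw [hTdef, Submodule.map_span]
        congr 1
        ext x
        constructor
        · rintro ⟨_, ⟨p, rfl⟩, rfl⟩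
          exact ⟨μ p, (map_smul μ (op e) p).symm⟩
        · rintro ⟨p', rfl⟩
          refine ⟨(op e) • μ.symm p', ⟨μ.symm p', rfl⟩, ?_⟩
          rw [map_smul]
          congr 1
      exact ⟨(LinearEquiv.ofBijective s ⟨hsinj, hssurj⟩).trans
        (Submodule.Quotient.equiv T _ μ hmap)⟩
  · -- backward direction
    rintro ⟨P, hPproj, hPfin, ⟨φ⟩⟩
    intro X _ _ hXfin hX Y _ _ f g hfinj hgsurj hexact
    have hXe : ∀ x : X, (op e) • x = 0 := aux_smul_zero e hX
    set T : Submodule Aᵐᵒᵖ P :=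
      Submodule.span Aᵐᵒᵖ (Set.range fun p : P => (op e) • p) with hTdef
    set ψ : P →ₗ[Aᵐᵒᵖ] M := (φ.symm : _ →ₗ[Aᵐᵒᵖ] M).comp T.mkQ with hψdef
    obtain ⟨h, hh⟩ := Module.projective_lifting_property g ψ hgsurj
    have hTker : T ≤ LinearMap.ker h := by
      rw [Submodule.span_le]
      rintro _ ⟨p, rfl⟩
      show h ((op e) • p) = 0
      rw [map_smul]
      have hge : g ((op e) • h p) = 0 := by
        rw [map_smul]
        have : g (h p) = ψ p := DFunLike.congr_fun hh p
        rw [this, hMe]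
      obtain ⟨x, hx⟩ := (hexact _).1 hge
      calc (op e) • h p = (op e) • ((op e) • h p) := by
            rw [← mul_smul, hee]
        _ = (op e) • f x := by rw [hx]
        _ = f ((op e) • x) := (map_smul f _ _).symm
        _ = 0 := by rw [hXe, map_zero]
    set hbar : (P ⧸ T) →ₗ[Aᵐᵒᵖ] Y := T.liftQ h hTker with hhbardef
    refine ⟨hbar.comp (φ : M →ₗ[Aᵐᵒᵖ] (P ⧸ T)), ?_⟩
    ext m
    show g (hbar (φ m)) = m
    obtain ⟨p, hp⟩ := T.mkQ_surjective (φ m)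
    have h1 : g (hbar (T.mkQ p)) = ψ p := by
      show g (h p) = ψ p
      exact DFunLike.congr_fun hh p
    rw [← hp, h1, hψdef]
    show φ.symm (T.mkQ p) = m
    rw [hp, LinearEquiv.symm_apply_apply]
end

section
/- Let A be a finite-dimensional k-algebra, e an idempotent, and M an indecomposable finitely generated right A-module with Hom_A(eA, M) = 0. If the projective dimension of M as an A-module is at most 1, then the projective dimension of M as an A/AeA-module is at most 1. -/
open MulOpposite

/-- `pdLE R d M` : the `R`-module `M` has projective dimension at most `d`. -/
def pdLE (R : Type) [Ring R] : ℕ → (M : Type) → [_inst : AddCommGroup M] → [_inst2 : Module R M] → Prop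
  | 0, M, _, _ => Module.Projective R M
  | d + 1, M, _, _ =>
    ∃ (P : ModuleCat R) (f : P →ₗ[R] M), Module.Projective R P ∧
      Function.Surjective f ∧ pdLE R d (LinearMap.ker f)

section Aux

variable {R S : Type} [Ring R] [Ring S]

theorem smul_congr' {X : Type} [AddCommGroup X] [Module R X] (ρ : R →+* S)
    (h : ∀ (r : R) (x : X), ρ r = 0 → r • x = 0) {r r' : R} (hrr : ρ r = ρ r') (x : X) :
    r • x = r' • x := by
  have h2 := h (r - r') x (by rw [map_sub, hrr, sub_self])
  rw [sub_smul] at h2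
  exact sub_eq_zero.mp h2

/-- `S`-module structure on an `R`-module annihilated by the kernel of a surjective
ring hom `ρ : R →+* S`. -/
noncomputable def modS (ρ : R →+* S) (hρ : Function.Surjective ρ)
    (X : Type) [AddCommGroup X] [Module R X]
    (h : ∀ (r : R) (x : X), ρ r = 0 → r • x = 0) : Module S X where
  smul s x := (hρ s).choose • x
  one_smul x := by
    show (hρ (1:S)).choose • x = x
    have h1 : (hρ (1:S)).choose • x = (1:R) • x :=
      smul_congr' ρ h (by rw [(hρ (1:S)).choose_spec, map_one]) x
    rw [h1, one_smul]
  mul_smul s t x := by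
    show (hρ (s*t)).choose • x = (hρ s).choose • (hρ t).choose • x
    rw [← mul_smul]
    exact smul_congr' ρ h (by rw [(hρ (s*t)).choose_spec, map_mul,
      (hρ s).choose_spec, (hρ t).choose_spec]) x
  smul_zero s := smul_zero _
  smul_add s x y := smul_add _ _ _
  add_smul s t x := by
    show (hρ (s+t)).choose • x = (hρ s).choose • x + (hρ t).choose • x
    rw [← add_smul]
    exact smul_congr' ρ h (by rw [(hρ (s+t)).choose_spec, map_add,
      (hρ s).choose_spec, (hρ t).choose_spec]) x
  zero_smul x := by
    show (hρ (0:S)).choose • x = 0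
    have h1 : (hρ (0:S)).choose • x = (0:R) • x :=
      smul_congr' ρ h (by rw [(hρ (0:S)).choose_spec, map_zero]) x
    rw [h1, zero_smul]

/-- The submodule `X·ε` generated by the image of scalar multiplication by `ε`. -/
def Tspan (ε : R) (X : Type) [AddCommGroup X] [Module R X] : Submodule R X :=
  Submodule.span R {x : X | ∃ y : X, x = ε • y}

theorem smul_mem_Tspan (ε : R) {X : Type} [AddCommGroup X] [Module R X] (y : X) :
    ε • y ∈ Tspan ε X := Submodule.subset_span ⟨y, rfl⟩

theorem Tspan_le (ε : R) {X : Type} [AddCommGroup X] [Module R X] (p : Submodule R X)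
    (hp : ∀ y : X, ε • y ∈ p) : Tspan ε X ≤ p :=
  Submodule.span_le.mpr (by rintro _ ⟨y, rfl⟩; exact hp y)

/-- If `X` is a projective `R`-module and `ρ ε = 0`, then `X / Xε` is projective as
an `S`-module, for any compatible `S`-module structure. -/
theorem projS (ρ : R →+* S) (hρ : Function.Surjective ρ) (ε : R) (hε0 : ρ ε = 0)
    (X : Type) [AddCommGroup X] [Module R X] (hX : Module.Projective R X)
    [iS : Module S (X ⧸ Tspan ε X)]
    (hsmul : ∀ (s : S) (r : R) (q : X ⧸ Tspan ε X), ρ r = s → s • q = r • q) :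
    Module.Projective S (X ⧸ Tspan ε X) := by
  letI iY : Module R ((X ⧸ Tspan ε X) →₀ S) := Module.compHom _ ρ
  have hFsurj : Function.Surjective (Finsupp.linearCombination S (id : (X ⧸ Tspan ε X) → _)) :=
    Finsupp.linearCombination_id_surjective S _
  let F_R : ((X ⧸ Tspan ε X) →₀ S) →ₗ[R] (X ⧸ Tspan ε X) :=
    { toFun := Finsupp.linearCombination S id
      map_add' := (Finsupp.linearCombination S id).map_add
      map_smul' := fun r y => by
        show Finsupp.linearCombination S id ((ρ r) • y) = r • Finsupp.linearCombination S id y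
        rw [map_smul]
        exact hsmul (ρ r) r _ rfl }
  obtain ⟨φ, hφ⟩ := Module.projective_lifting_property (h := hX) F_R (Tspan ε X).mkQ hFsurj
  have hφT : Tspan ε X ≤ LinearMap.ker φ := by
    refine Tspan_le ε _ (fun y => ?_)
    rw [LinearMap.mem_ker, map_smul]
    show (ρ ε) • φ y = 0
    rw [hε0, zero_smul]
  let ℓ : (X ⧸ Tspan ε X) →ₗ[R] ((X ⧸ Tspan ε X) →₀ S) := (Tspan ε X).liftQ φ hφT
  refine (Module.projective_def).mpr
    ⟨{ toFun := ℓ, map_add' := ℓ.map_add, map_smul' := ?_ }, ?_⟩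
  · intro c q
    show ℓ (c • q) = (RingHom.id S c) • ℓ q
    rw [hsmul c (hρ c).choose q (hρ c).choose_spec, map_smul]
    show (ρ (hρ c).choose) • ℓ q = (RingHom.id S c) • ℓ q
    rw [(hρ c).choose_spec]
    rfl
  · intro q
    obtain ⟨x, rfl⟩ := (Tspan ε X).mkQ_surjective q
    show Finsupp.linearCombination S id (ℓ ((Tspan ε X).mkQ x)) = (Tspan ε X).mkQ x
    have h1 : ℓ ((Tspan ε X).mkQ x) = φ x := by
      rw [Submodule.mkQ_apply, Submodule.liftQ_apply]
    rw [h1]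
    exact LinearMap.congr_fun hφ x

theorem annOfKer {A B : Type} [Ring A] [Ring B] (π : A →+* B) (e : A)
    (hker : ∀ x : A, π x = 0 ↔ x ∈ AddSubgroup.closure {y : A | ∃ a b : A, y = a * e * b})
    (X : Type) [AddCommGroup X] [Module Aᵐᵒᵖ X] (hX : ∀ x : X, (op e) • x = 0)
    (r : Aᵐᵒᵖ) (x : X) (hr : π (unop r) = 0) : r • x = 0 := by
  have hmem := (hker _).mp hr
  have key : ∀ z : X, (op (unop r)) • z = 0 := by
    refine AddSubgroup.closure_induction (p := fun y _ => ∀ z : X, (op y) • z = 0)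
      ?_ ?_ ?_ ?_ hmem
    · rintro w ⟨a, b, rfl⟩ z
      have hop : op (a * e * b) = op b * (op e * op a) := by rw [op_mul, op_mul]
      rw [hop, mul_smul, mul_smul, hX, smul_zero]
    · intro z; rw [op_zero, zero_smul]
    · intro w v _ _ hw hv z
      rw [op_add, add_smul, hw, hv, add_zero]
    · intro w _ hw z
      rw [op_neg, neg_smul, hw, neg_zero]
  have h5 := key x
  rwa [op_unop] at h5

end Aux

/-- Let `A` be a finite-dimensional `k`-algebra, `e` an idempotent and
`B = A/AeA` (encoded as a surjective ring homomorphism `π : A → B` whose kernel is the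
two-sided ideal generated by `e`).  If `M` is an indecomposable finitely generated right
`A`-module with `Hom_A(eA, M) = 0` and `pd_A M ≤ 1`, then `M`, viewed as a right `B`-module
(i.e. any right `B`-module `N` isomorphic to `M` compatibly with `π`), has `pd_B N ≤ 1`. -/
theorem stmt4 (k A B : Type) [Field k] [Ring A] [Algebra k A] [FiniteDimensional k A]
    [Ring B] (π : A →+* B) (hπ : Function.Surjective π)
    (e : A) (he : e * e = e)
    (hker : ∀ x : A, π x = 0 ↔ x ∈ AddSubgroup.closure {y : A | ∃ a b : A, y = a * e * b})
    (M : Type) [AddCommGroup M] [Module Aᵐᵒᵖ M] [Module.Finite Aᵐᵒᵖ M]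
    -- `M` is indecomposable
    (hnt : Nontrivial M)
    (hindec : ∀ f : M →ₗ[Aᵐᵒᵖ] M, f ∘ₗ f = f → f = 0 ∨ f = LinearMap.id)
    -- `Hom_A(eA, M) = 0`
    (hperp : ∀ g : (Submodule.span Aᵐᵒᵖ ({e} : Set A)) →ₗ[Aᵐᵒᵖ] M, g = 0)
    -- `pd_A M ≤ 1`
    (hpd : pdLE Aᵐᵒᵖ 1 M) :
    ∃ (N : ModuleCat Bᵐᵒᵖ) (φ : M ≃+ N),
      (∀ (a : A) (m : M), φ ((op a) • m) = (op (π a)) • φ m) ∧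
      pdLE Bᵐᵒᵖ 1 N := by
  classical
  -- the induced ring hom on opposite rings
  let ρ : Aᵐᵒᵖ →+* Bᵐᵒᵖ :=
    { toFun := fun x => op (π (unop x))
      map_one' := by simp
      map_mul' := fun x y => by simp
      map_zero' := by simp
      map_add' := fun x y => by simp }
  have hρs : Function.Surjective ρ := by
    intro b; obtain ⟨a, ha⟩ := hπ (unop b)
    refine ⟨op a, ?_⟩
    show op (π (unop (op a))) = b
    rw [unop_op, ha, op_unop]
  have hρ0 : ∀ r : Aᵐᵒᵖ, ρ r = 0 → π (unop r) = 0 := by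
    intro r h
    have h1 : op (π (unop r)) = (0 : Bᵐᵒᵖ) := h
    simpa using congrArg unop h1
  have hπe : π e = 0 := (hker e).mpr (AddSubgroup.subset_closure ⟨1, 1, by simp⟩)
  have hρε : ρ (op e) = 0 := by
    show op (π (unop (op e))) = 0
    rw [unop_op, hπe, op_zero]
  -- `M·e = 0`
  have hMe : ∀ m : M, (op e) • m = 0 := by
    intro m
    let g : (Submodule.span Aᵐᵒᵖ ({e} : Set A)) →ₗ[Aᵐᵒᵖ] M :=
      { toFun := fun x => (op (x : A)) • ((op e) • m)
        map_add' := fun x y => by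
          show (op ((x : A) + (y : A))) • ((op e) • m) = _
          rw [op_add, add_smul]
        map_smul' := fun c x => by
          show (op ((x : A) * unop c)) • ((op e) • m) = c • ((op (x : A)) • ((op e) • m))
          rw [op_mul, op_unop, mul_smul] }
    have hg := hperp g
    have h0 : (op e) • ((op e) • m) = 0 := by
      have h1 : g ⟨e, Submodule.mem_span_singleton_self e⟩ = 0 := by rw [hg]; rfl
      exact h1
    have h2 : (op e) • ((op e) • m) = (op e) • m := by
      rw [← mul_smul, ← op_mul, he]
    rw [← h2]
    exact h0
  -- annihilation facts and module structures
  have hAnnM : ∀ (r : Aᵐᵒᵖ) (x : M), ρ r = 0 → r • x = 0 := fun r x h =>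
    annOfKer π e hker M hMe r x (hρ0 r h)
  letI iM : Module Bᵐᵒᵖ M := modS ρ hρs M hAnnM
  have hsmulM : ∀ (s : Bᵐᵒᵖ) (r : Aᵐᵒᵖ) (x : M), ρ r = s → s • x = r • x := by
    intro s r x hrs
    show (hρs s).choose • x = r • x
    exact smul_congr' ρ hAnnM (by rw [(hρs s).choose_spec, hrs]) x
  -- unpack the projective resolution of `M` over `A`
  obtain ⟨P, f, hPproj, hfsurj, hKpd⟩ :=
    (hpd : ∃ (P : ModuleCat Aᵐᵒᵖ) (f : ↑P →ₗ[Aᵐᵒᵖ] M), Module.Projective Aᵐᵒᵖ ↑P ∧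
      Function.Surjective ⇑f ∧ pdLE Aᵐᵒᵖ 0 ↥(LinearMap.ker f))
  have hKproj : Module.Projective Aᵐᵒᵖ ↥(LinearMap.ker f) := hKpd
  -- the quotient `P / Pe` and its `B`-module structure
  have hQe : ∀ q : (↑P ⧸ Tspan (op e) ↑P), (op e) • q = 0 := by
    intro q; obtain ⟨p, rfl⟩ := Submodule.mkQ_surjective _ q
    rw [← map_smul, Submodule.mkQ_apply, Submodule.Quotient.mk_eq_zero]
    exact smul_mem_Tspan (op e) p
  have hAnnQ : ∀ (r : Aᵐᵒᵖ) (q : ↑P ⧸ Tspan (op e) ↑P), ρ r = 0 → r • q = 0 := fun r q h =>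
    annOfKer π e hker _ hQe r q (hρ0 r h)
  letI iQ : Module Bᵐᵒᵖ (↑P ⧸ Tspan (op e) ↑P) := modS ρ hρs _ hAnnQ
  have hsmulQ : ∀ (s : Bᵐᵒᵖ) (r : Aᵐᵒᵖ) (q : ↑P ⧸ Tspan (op e) ↑P), ρ r = s → s • q = r • q := by
    intro s r q hrs
    show (hρs s).choose • q = r • q
    exact smul_congr' ρ hAnnQ (by rw [(hρs s).choose_spec, hrs]) q
  have hQproj : Module.Projective Bᵐᵒᵖ (↑P ⧸ Tspan (op e) ↑P) :=
    projS ρ hρs (op e) hρε ↑P hPproj hsmulQ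
  -- the quotient `K / Ke` and its `B`-module structure
  have hKQe : ∀ q : (↥(LinearMap.ker f) ⧸ Tspan (op e) ↥(LinearMap.ker f)), (op e) • q = 0 := by
    intro q; obtain ⟨p, rfl⟩ := Submodule.mkQ_surjective _ q
    rw [← map_smul, Submodule.mkQ_apply, Submodule.Quotient.mk_eq_zero]
    exact smul_mem_Tspan (op e) p
  have hAnnKQ : ∀ (r : Aᵐᵒᵖ) (q : ↥(LinearMap.ker f) ⧸ Tspan (op e) ↥(LinearMap.ker f)),
      ρ r = 0 → r • q = 0 := fun r q h =>
    annOfKer π e hker _ hKQe r q (hρ0 r h)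
  letI iKQ : Module Bᵐᵒᵖ (↥(LinearMap.ker f) ⧸ Tspan (op e) ↥(LinearMap.ker f)) :=
    modS ρ hρs _ hAnnKQ
  have hsmulKQ : ∀ (s : Bᵐᵒᵖ) (r : Aᵐᵒᵖ)
      (q : ↥(LinearMap.ker f) ⧸ Tspan (op e) ↥(LinearMap.ker f)), ρ r = s → s • q = r • q := by
    intro s r q hrs
    show (hρs s).choose • q = r • q
    exact smul_congr' ρ hAnnKQ (by rw [(hρs s).choose_spec, hrs]) q
  have hKQproj : Module.Projective Bᵐᵒᵖ (↥(LinearMap.ker f) ⧸ Tspan (op e) ↥(LinearMap.ker f)) :=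
    projS ρ hρs (op e) hρε ↥(LinearMap.ker f) hKproj hsmulKQ
  -- `Pe ⊆ K`
  have hTK : Tspan (op e) ↑P ≤ LinearMap.ker f := Tspan_le _ _ (fun p => by
    rw [LinearMap.mem_ker, map_smul]; exact hMe (f p))
  -- the induced surjection `P/Pe → M`
  let f0 : (↑P ⧸ Tspan (op e) ↑P) →ₗ[Aᵐᵒᵖ] M := Submodule.liftQ _ f hTK
  have hf0 : ∀ p : ↑P, f0 (Submodule.Quotient.mk p) = f p := fun p =>
    Submodule.liftQ_apply _ f p
  let f' : (↑P ⧸ Tspan (op e) ↑P) →ₗ[Bᵐᵒᵖ] M :=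
    { toFun := f0
      map_add' := f0.map_add
      map_smul' := fun s q => by
        show f0 (s • q) = (RingHom.id Bᵐᵒᵖ s) • f0 q
        rw [hsmulQ s (hρs s).choose q (hρs s).choose_spec, map_smul]
        show (hρs s).choose • f0 q = s • f0 q
        exact (hsmulM s _ (f0 q) (hρs s).choose_spec).symm }
  have hf'surj : Function.Surjective f' := by
    intro m; obtain ⟨p, hp⟩ := hfsurj m
    exact ⟨Submodule.Quotient.mk p,
      by rw [show f' (Submodule.Quotient.mk p) = f0 (Submodule.Quotient.mk p) from rfl, hf0]
         exact hp⟩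
  -- `Pe ⊆ (Ke)` inside `K`
  have hTsub : Tspan (op e) ↑P ≤
      Submodule.map (LinearMap.ker f).subtype (Tspan (op e) ↥(LinearMap.ker f)) := by
    refine Tspan_le _ _ (fun p => ?_)
    have hpK : (op e) • p ∈ LinearMap.ker f := by
      rw [LinearMap.mem_ker, map_smul]; exact hMe (f p)
    refine Submodule.mem_map.mpr ⟨(op e) • (⟨(op e) • p, hpK⟩ : ↥(LinearMap.ker f)),
      smul_mem_Tspan _ _, ?_⟩
    show (op e) • ((op e) • p) = (op e) • p
    rw [← mul_smul, ← op_mul, he]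
  -- the comparison map `K/Ke → ker (P/Pe → M)`
  let ψ : ↥(LinearMap.ker f) →ₗ[Aᵐᵒᵖ] (↑P ⧸ Tspan (op e) ↑P) :=
    (Submodule.mkQ _).comp (LinearMap.ker f).subtype
  have hψTK : Tspan (op e) ↥(LinearMap.ker f) ≤ LinearMap.ker ψ := Tspan_le _ _ (fun y => by
    rw [LinearMap.mem_ker]
    show Submodule.Quotient.mk ((LinearMap.ker f).subtype ((op e) • y)) = 0
    rw [Submodule.Quotient.mk_eq_zero]
    exact smul_mem_Tspan (op e) (y : ↑P))
  let ψQ : (↥(LinearMap.ker f) ⧸ Tspan (op e) ↥(LinearMap.ker f)) →ₗ[Aᵐᵒᵖ]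
      (↑P ⧸ Tspan (op e) ↑P) := Submodule.liftQ _ ψ hψTK
  have hψQ : ∀ y : ↥(LinearMap.ker f),
      ψQ (Submodule.Quotient.mk y) = Submodule.Quotient.mk (y : ↑P) := fun y =>
    Submodule.liftQ_apply _ ψ y
  have hmemker : ∀ z, f' (ψQ z) = 0 := by
    intro z; obtain ⟨y, rfl⟩ := Submodule.mkQ_surjective _ z
    show f0 (ψQ (Submodule.Quotient.mk y)) = 0
    rw [hψQ, hf0]
    exact y.2
  let F : (↥(LinearMap.ker f) ⧸ Tspan (op e) ↥(LinearMap.ker f)) →ₗ[Bᵐᵒᵖ]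
      ↥(LinearMap.ker f') :=
    { toFun := fun z => ⟨ψQ z, by rw [LinearMap.mem_ker]; exact hmemker z⟩
      map_add' := fun x y => Subtype.ext (ψQ.map_add x y)
      map_smul' := fun s z => Subtype.ext (by
        show ψQ (s • z) = s • ψQ z
        rw [hsmulKQ s (hρs s).choose z (hρs s).choose_spec,
            hsmulQ s (hρs s).choose (ψQ z) (hρs s).choose_spec, map_smul]) }
  have hFinj : Function.Injective F := by
    have hker0 : ∀ u, ψQ u = 0 → u = 0 := by
      intro u hu
      obtain ⟨y, rfl⟩ := Submodule.mkQ_surjective _ u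
      have h2 : (y : ↑P) ∈ Tspan (op e) ↑P := by
        have h3 : Submodule.Quotient.mk (y : ↑P) = (0 : ↑P ⧸ Tspan (op e) ↑P) := by
          rw [← hψQ y]; exact hu
        exact (Submodule.Quotient.mk_eq_zero _).mp h3
      obtain ⟨w', hw'TK, hw'⟩ := Submodule.mem_map.mp (hTsub h2)
      rw [Submodule.mkQ_apply, Submodule.Quotient.mk_eq_zero]
      have h4 : w' = y := Subtype.ext hw'
      rwa [h4] at hw'TK
    intro z w hzw
    have h1 : ψQ z = ψQ w := congrArg Subtype.val hzw
    have h5 := hker0 (z - w) (by rw [map_sub, h1, sub_self])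
    exact sub_eq_zero.mp h5
  have hFsurj2 : Function.Surjective F := by
    rintro ⟨q, hq⟩
    obtain ⟨p, rfl⟩ := Submodule.mkQ_surjective _ q
    have hpK : p ∈ LinearMap.ker f := by
      rw [LinearMap.mem_ker]
      have h4 : f' ((Tspan (op e) ↑P).mkQ p) = 0 := hq
      rw [show f' ((Tspan (op e) ↑P).mkQ p) = f0 (Submodule.Quotient.mk p) from rfl, hf0] at h4
      exact h4
    refine ⟨Submodule.Quotient.mk ⟨p, hpK⟩, Subtype.ext ?_⟩
    show ψQ (Submodule.Quotient.mk ⟨p, hpK⟩) = (Tspan (op e) ↑P).mkQ p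
    rw [hψQ]
    rfl
  haveI := hKQproj
  have hkerproj : Module.Projective Bᵐᵒᵖ ↥(LinearMap.ker f') :=
    Module.Projective.of_equiv (LinearEquiv.ofBijective F ⟨hFinj, hFsurj2⟩)
  -- assemble
  refine ⟨ModuleCat.of Bᵐᵒᵖ M, AddEquiv.refl M, ?_, ?_⟩
  · intro a m
    show (op a) • m = (op (π a)) • m
    exact (hsmulM (op (π a)) (op a) m rfl).symm
  · show ∃ (P' : ModuleCat Bᵐᵒᵖ) (g : ↑P' →ₗ[Bᵐᵒᵖ] ↑(ModuleCat.of Bᵐᵒᵖ M)),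
      Module.Projective Bᵐᵒᵖ ↑P' ∧ Function.Surjective ⇑g ∧ pdLE Bᵐᵒᵖ 0 ↥(LinearMap.ker g)
    exact ⟨ModuleCat.of Bᵐᵒᵖ (↑P ⧸ Tspan (op e) ↑P), f', hQproj, hf'surj, hkerproj⟩
end

section
/- Let A be a finite-dimensional k-algebra such that every indecomposable finitely generated right A-module has projective dimension at most 1 or injective dimension at most 1 (A is shod). Then for any idempotent e ∈ A, the quotient algebra A/AeA is also shod. -/
open MulOpposite

/-- `idLE R d M` : the `R`-module `M` has injective dimension at most `d`. -/
def idLE (R : Type) [Ring R] : ℕ → (M : Type) → [_inst : AddCommGroup M] → [_inst2 : Module R M] → Prop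
  | 0, M, _, _ => Module.Injective R M
  | d + 1, M, _, _ =>
    ∃ (I : ModuleCat R) (f : M →ₗ[R] I), Module.Injective R I ∧
      Function.Injective f ∧ idLE R d (I ⧸ LinearMap.range f)

/-- An `R`-module is indecomposable if it is nonzero and its only idempotent endomorphisms
are `0` and the identity. -/
def IndecMod (R : Type) [Ring R] (M : Type) [AddCommGroup M] [Module R M] : Prop :=
  Nontrivial M ∧ ∀ f : M →ₗ[R] M, f ∘ₗ f = f → f = 0 ∨ f = LinearMap.id

/-- A ring `R` is shod (for right modules over `Rᵒᵖ`, pass `Rᵒᵖ`) if every indecomposable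
finitely generated module has projective dimension at most 1 or injective dimension at
most 1. -/
def Shod (R : Type) [Ring R] : Prop :=
  ∀ M : ModuleCat R, Module.Finite R M → IndecMod R M → (pdLE R 1 M ∨ idLE R 1 M)

namespace Stmt8Aux

theorem pdLE_one (R : Type) [Ring R] (M : Type) [AddCommGroup M] [Module R M] :
    pdLE R 1 M ↔ ∃ (P : ModuleCat.{0} R) (f : P →ₗ[R] M), Module.Projective R P ∧
      Function.Surjective f ∧ Module.Projective R (LinearMap.ker f) := Iff.rfl

theorem idLE_one (R : Type) [Ring R] (M : Type) [AddCommGroup M] [Module R M] :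
    idLE R 1 M ↔ ∃ (I : ModuleCat.{0} R) (f : M →ₗ[R] I), Module.Injective R I ∧
      Function.Injective f ∧ Module.Injective R (I ⧸ LinearMap.range f) := Iff.rfl

variable {R S : Type} [Ring R] [Ring S]

/-- Scalars act through `ρ` on modules killed by `ker ρ`. -/
theorem smul_wd {N : Type} [AddCommGroup N] [Module R N] (ρ : R →+* S)
    (hk : ∀ r : R, ρ r = 0 → ∀ n : N, r • n = 0) {r r' : R} (h : ρ r = ρ r') (n : N) :
    r • n = r' • n := by
  have h0 : ρ (r - r') = 0 := by rw [map_sub, h, sub_self]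
  have := hk _ h0 n
  rwa [sub_smul, sub_eq_zero] at this

/-- The `S`-module structure on an `R`-module killed by `ker ρ`. -/
noncomputable def modS (ρ : R →+* S) (hρ : Function.Surjective ρ) {N : Type} [AddCommGroup N]
    [Module R N] (hk : ∀ r : R, ρ r = 0 → ∀ n : N, r • n = 0) : Module S N :=
  letI : SMul S N := ⟨fun s n => Function.surjInv hρ s • n⟩
  hρ.moduleLeft ρ fun c x => smul_wd ρ hk (Function.surjInv_eq hρ (ρ c)) x

theorem modS_compat (ρ : R →+* S) (hρ : Function.Surjective ρ) {N : Type} [AddCommGroup N]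
    [Module R N] (hk : ∀ r : R, ρ r = 0 → ∀ n : N, r • n = 0) (r : R) (n : N) :
    (letI := modS ρ hρ hk; (ρ r • n : N)) = r • n :=
  smul_wd ρ hk (Function.surjInv_eq hρ (ρ r)) n

/-- Upgrade an `R`-linear map between compatible bimodule structures to an `S`-linear map. -/
def mapS (ρ : R →+* S) (hρ : Function.Surjective ρ) {N₁ N₂ : Type}
    [AddCommGroup N₁] [Module R N₁] [Module S N₁] [AddCommGroup N₂] [Module R N₂] [Module S N₂]
    (hc₁ : ∀ (r : R) (n : N₁), ρ r • n = r • n) (hc₂ : ∀ (r : R) (n : N₂), ρ r • n = r • n)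
    (g : N₁ →ₗ[R] N₂) : N₁ →ₗ[S] N₂ where
  toFun := g
  map_add' := map_add g
  map_smul' s n := by
    obtain ⟨r, rfl⟩ := hρ s
    rw [RingHom.id_apply, hc₁, hc₂]
    exact g.map_smul r n

/-- Downgrade an `S`-linear map between compatible bimodule structures to an `R`-linear map. -/
def mapR (ρ : R →+* S) {N₁ N₂ : Type}
    [AddCommGroup N₁] [Module R N₁] [Module S N₁] [AddCommGroup N₂] [Module R N₂] [Module S N₂]
    (hc₁ : ∀ (r : R) (n : N₁), ρ r • n = r • n) (hc₂ : ∀ (r : R) (n : N₂), ρ r • n = r • n)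
    (g : N₁ →ₗ[S] N₂) : N₁ →ₗ[R] N₂ where
  toFun := g
  map_add' := map_add g
  map_smul' r n := by
    rw [RingHom.id_apply, ← hc₁, ← hc₂]
    exact g.map_smul (ρ r) n

/-- Descend a linear map along a surjection whose kernel it kills. -/
theorem descend {N P T : Type} [AddCommGroup N] [Module R N] [AddCommGroup P]
    [Module R P] [AddCommGroup T] [Module R T] (q : N →ₗ[R] P) (hq : Function.Surjective q)
    (f : N →ₗ[R] T) (h0 : ∀ n, q n = 0 → f n = 0) :
    ∃ g : P →ₗ[R] T, ∀ n, g (q n) = f n := by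
  have key : ∀ n n', q n = q n' → f n = f n' := by
    intro n n' h
    have := h0 (n - n') (by rw [map_sub, h, sub_self])
    rwa [map_sub, sub_eq_zero] at this
  refine ⟨⟨⟨fun p => f (Function.surjInv hq p), fun p₁ p₂ => ?_⟩, fun r p => ?_⟩,
    fun n => key _ _ (Function.surjInv_eq hq _)⟩
  · have h := key (Function.surjInv hq (p₁ + p₂))
      (Function.surjInv hq p₁ + Function.surjInv hq p₂)
      (by rw [map_add, Function.surjInv_eq hq, Function.surjInv_eq hq, Function.surjInv_eq hq])
    simpa [map_add] using h
  · have h := key (Function.surjInv hq (r • p)) (r • Function.surjInv hq p)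
      (by rw [map_smul, Function.surjInv_eq hq, Function.surjInv_eq hq])
    simpa [map_smul] using h

/-- The `mapRange` of `ρ` as an `R`-linear map, with target module structure via `ρ`. -/
noncomputable def mapRangeρ (ρ : R →+* S) (T : Type) :
    letI : Module R (T →₀ S) := Module.compHom _ ρ
    (T →₀ R) →ₗ[R] (T →₀ S) :=
  letI : Module R (T →₀ S) := Module.compHom _ ρ
  { toFun := Finsupp.mapRange ρ (map_zero ρ)
    map_add' := fun v w => Finsupp.mapRange_add (map_add ρ) v w
    map_smul' := fun r v => by
      show Finsupp.mapRange ρ (map_zero ρ) (r • v) = ρ r • Finsupp.mapRange ρ (map_zero ρ) v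
      ext a
      simp [Finsupp.mapRange_apply, Finsupp.smul_apply, smul_eq_mul, map_mul] }

theorem total_mapRange (ρ : R →+* S) {N T : Type} [AddCommGroup N] [Module R N]
    [AddCommGroup T] [Module R T] [Module S T] (hcT : ∀ (r : R) (t : T), ρ r • t = r • t)
    (q : N →ₗ[R] T) (v : N →₀ R) :
    Finsupp.linearCombination S id (Finsupp.mapRange ρ (map_zero ρ) (Finsupp.mapDomain q v)) =
      q (Finsupp.linearCombination R id v) := by
  induction v using Finsupp.induction with
  | zero => simp
  | single_add a r v _ _ ih =>
    rw [Finsupp.mapDomain_add, Finsupp.mapDomain_single,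
      Finsupp.mapRange_add (map_add ρ), map_add, map_add, ih,
      Finsupp.mapRange_single, Finsupp.linearCombination_single,
      Finsupp.linearCombination_single]
    simp only [id_eq, map_add, map_smul]
    rw [hcT]

/-- Transfer projectivity along a surjection with kernel contained in the span
of `ker ρ`-multiples. -/
theorem proj_transfer (ρ : R →+* S) (hρ : Function.Surjective ρ) {N T : Type}
    [AddCommGroup N] [Module R N] [AddCommGroup T] [Module R T] [Module S T]
    (hcT : ∀ (r : R) (t : T), ρ r • t = r • t)
    (hN : Module.Projective R N) (q : N →ₗ[R] T) (hq : Function.Surjective q)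
    (hkq : ∀ n : N, q n = 0 →
      n ∈ Submodule.span R {x : N | ∃ r : R, ρ r = 0 ∧ ∃ y : N, x = r • y}) :
    Module.Projective S T := by
  letI : Module R (T →₀ S) := Module.compHom _ ρ
  have hcF : ∀ (r : R) (w : T →₀ S), ρ r • w = r • w := fun r w => rfl
  obtain ⟨s, hs⟩ := hN.out
  set χ : N →ₗ[R] (T →₀ S) := (mapRangeρ ρ T).comp ((Finsupp.lmapDomain R R ⇑q).comp s) with hχ
  have hχ0 : ∀ n, q n = 0 → χ n = 0 := by
    intro n hn
    have hle : Submodule.span R {x : N | ∃ r : R, ρ r = 0 ∧ ∃ y : N, x = r • y} ≤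
        LinearMap.ker χ := by
      rw [Submodule.span_le]
      rintro x ⟨r, hr, y, rfl⟩
      have hsm : χ (r • y) = ρ r • χ y := by rw [map_smul, hcF]
      simp only [SetLike.mem_coe, LinearMap.mem_ker, hsm, hr, zero_smul]
    exact hle (hkq n hn)
  obtain ⟨g0, hg0⟩ := descend q hq χ hχ0
  refine Module.projective_def.mpr ⟨mapS ρ hρ hcT hcF g0, ?_⟩
  intro t
  obtain ⟨n, rfl⟩ := hq t
  show Finsupp.linearCombination S id (g0 (q n)) = q n
  rw [hg0 n]
  have hv : Finsupp.linearCombination S id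
      (Finsupp.mapRange ρ (map_zero ρ) (Finsupp.mapDomain q (s n))) =
      q (Finsupp.linearCombination R id (s n)) := total_mapRange ρ hcT q (s n)
  rw [show χ n = Finsupp.mapRange ρ (map_zero ρ) (Finsupp.mapDomain q (s n)) from rfl, hv, hs n]

/-- Transfer injectivity along an embedding into an `R`-injective module whose image is the
`ker ρ`-torsion-free part. -/
theorem inj_transfer (ρ : R →+* S) (hρ : Function.Surjective ρ) {T I : Type}
    [AddCommGroup T] [Module R T] [Module S T] (hcT : ∀ (r : R) (t : T), ρ r • t = r • t)
    [AddCommGroup I] [Module R I] (hI : Module.Injective R I)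
    (ι : T →ₗ[R] I) (hinj : Function.Injective ι)
    (hrange : ∀ x : I, (∀ r : R, ρ r = 0 → r • x = 0) → ∃ t : T, ι t = x) :
    Module.Injective S T := by
  constructor
  intro X Y _ _ _ _ f hf g
  letI : Module R X := Module.compHom X ρ
  letI : Module R Y := Module.compHom Y ρ
  have hcX : ∀ (r : R) (x : X), ρ r • x = r • x := fun _ _ => rfl
  have hcY : ∀ (r : R) (y : Y), ρ r • y = r • y := fun _ _ => rfl
  obtain ⟨h, hh⟩ := hI.out (mapR ρ hcX hcY f) hf (ι.comp (mapR ρ hcX hcT g))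
  have hmem : ∀ y : Y, ∃ t : T, ι t = h y := by
    intro y
    refine hrange (h y) fun r hr => ?_
    have h1 : r • y = (0 : Y) := by rw [← hcY, hr, zero_smul]
    rw [← map_smul, h1, map_zero]
  choose φ hφ using hmem
  have hadd : ∀ y z : Y, φ (y + z) = φ y + φ z := by
    intro y z
    apply hinj
    rw [map_add, hφ, hφ, hφ, map_add]
  have hsmulS : ∀ (s : S) (y : Y), φ (s • y) = s • φ y := by
    intro s y
    apply hinj
    obtain ⟨r, rfl⟩ := hρ s
    have h1 : (ρ r • y : Y) = r • y := hcY r y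
    have h2 : (ρ r • φ y : T) = r • φ y := hcT r (φ y)
    rw [hφ, h1, map_smul, h2, map_smul, hφ]
  refine ⟨⟨⟨φ, fun y z => hadd y z⟩, fun s y => hsmulS s y⟩, fun x => ?_⟩
  apply hinj
  show ι (φ (f x)) = ι (g x)
  rw [hφ]
  exact hh x

/-- The core transfer theorem: the shod property descends along surjections whose kernel is
the two-sided ideal generated by an idempotent. -/
theorem shod_transfer (ρ : R →+* S) (hρ : Function.Surjective ρ)
    (ε : R) (hε : ε * ε = ε)
    (hker : ∀ x : R, ρ x = 0 ↔ x ∈ AddSubgroup.closure {y : R | ∃ a b : R, y = a * ε * b})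
    (hshod : Shod R) : Shod S := by
  intro M hfin hind
  letI instR : Module R M := Module.compHom M ρ
  have hcM : ∀ (r : R) (m : M), ρ r • m = r • m := fun _ _ => rfl
  have hMkill : ∀ r : R, ρ r = 0 → ∀ m : M, r • m = 0 := by
    intro r hr m
    rw [← hcM, hr, zero_smul]
  have hρε : ρ ε = 0 := (hker ε).2 (AddSubgroup.subset_closure ⟨1, 1, by rw [one_mul, mul_one]⟩)
  -- finiteness over R
  have finR : Module.Finite R M := by
    obtain ⟨s, hs⟩ := hfin.fg_top
    refine ⟨⟨s, ?_⟩⟩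
    rw [eq_top_iff]
    intro m _
    have hm : m ∈ Submodule.span S (↑s : Set M) := by rw [hs]; trivial
    refine Submodule.span_induction (p := fun x _ => x ∈ Submodule.span R (↑s : Set M))
      (fun x hx => Submodule.subset_span hx) (Submodule.zero_mem _)
      (fun x y _ _ hx hy => Submodule.add_mem _ hx hy) (fun c x _ hx => ?_) hm
    obtain ⟨r, rfl⟩ := hρ c
    rw [hcM r x]
    exact Submodule.smul_mem _ r hx
  -- indecomposability over R
  have indR : IndecMod R M := by
    refine ⟨hind.1, fun f hf => ?_⟩
    have hfS := hind.2 (mapS ρ hρ hcM hcM f)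
      (LinearMap.ext fun m => show f (f m) = f m from DFunLike.congr_fun hf m)
    rcases hfS with h | h
    · exact Or.inl (LinearMap.ext fun m => DFunLike.congr_fun h m)
    · exact Or.inr (LinearMap.ext fun m => DFunLike.congr_fun h m)
  rcases hshod (ModuleCat.of R M) finR indR with hpd | hid
  · -- projective dimension case
    left
    obtain ⟨P, f, hP, hf, hK⟩ := (pdLE_one R _).mp hpd
    set K := LinearMap.ker f with hKdef
    set PJ : Submodule R P :=
      Submodule.span R {x : ↥P | ∃ r : R, ρ r = 0 ∧ ∃ p : ↥P, x = r • p} with hPJ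
    have hle : PJ ≤ LinearMap.ker f := by
      rw [hPJ, Submodule.span_le]
      rintro x ⟨r, hr, p, rfl⟩
      simp only [SetLike.mem_coe, LinearMap.mem_ker, map_smul]
      exact hMkill r hr (f p)
    have killQ : ∀ r : R, ρ r = 0 → ∀ z : (↥P ⧸ PJ), r • z = 0 := by
      intro r hr z
      obtain ⟨p, rfl⟩ := Submodule.Quotient.mk_surjective PJ z
      rw [← Submodule.Quotient.mk_smul, Submodule.Quotient.mk_eq_zero]
      exact Submodule.subset_span ⟨r, hr, p, rfl⟩
    letI instQS : Module S (↥P ⧸ PJ) := modS ρ hρ killQ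
    have hcQ : ∀ (r : R) (z : ↥P ⧸ PJ), ρ r • z = r • z := modS_compat ρ hρ killQ
    set fbar : (↥P ⧸ PJ) →ₗ[R] M := Submodule.liftQ PJ f hle with hfbar
    set f'' : (↥P ⧸ PJ) →ₗ[S] M := mapS ρ hρ hcQ hcM fbar with hf''def
    have hf''surj : Function.Surjective ⇑f'' := by
      intro m
      obtain ⟨p, hp⟩ := hf m
      refine ⟨Submodule.Quotient.mk p, ?_⟩
      show fbar (Submodule.Quotient.mk p) = m
      rw [Submodule.liftQ_apply]
      exact hp
    have hmemker : ∀ x : ↥K, (Submodule.Quotient.mk (x : ↥P) : ↥P ⧸ PJ) ∈ LinearMap.ker f'' := by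
      intro x
      rw [LinearMap.mem_ker]
      show fbar (Submodule.Quotient.mk (x : ↥P)) = 0
      rw [Submodule.liftQ_apply]
      exact x.2
    letI instKR : Module R ↥(LinearMap.ker f'') := Module.compHom _ ρ
    have hcKer : ∀ (r : R) (z : ↥(LinearMap.ker f'')), ρ r • z = r • z := fun _ _ => rfl
    set q : ↥K →ₗ[R] ↥(LinearMap.ker f'') :=
      { toFun := fun x => ⟨Submodule.Quotient.mk (x : ↥P), hmemker x⟩
        map_add' := fun x y => Subtype.ext (by
          show (Submodule.Quotient.mk ((x : ↥P) + (y : ↥P)) : ↥P ⧸ PJ) = _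
          rw [Submodule.Quotient.mk_add]
          rfl)
        map_smul' := fun r x => Subtype.ext (by
          show (Submodule.Quotient.mk (r • (x : ↥P)) : ↥P ⧸ PJ) =
            ρ r • (Submodule.Quotient.mk (x : ↥P) : ↥P ⧸ PJ)
          rw [Submodule.Quotient.mk_smul, hcQ]) } with hqdef
    have hqsurj : Function.Surjective ⇑q := by
      rintro ⟨z, hz⟩
      obtain ⟨p, rfl⟩ := Submodule.Quotient.mk_surjective PJ z
      have hp0 : f p = 0 := by
        have hz' : fbar (Submodule.Quotient.mk p) = 0 := hz
        rwa [Submodule.liftQ_apply] at hz'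
      exact ⟨⟨p, LinearMap.mem_ker.mpr hp0⟩, rfl⟩
    set KK : Submodule R ↥K :=
      Submodule.span R {x : ↥K | ∃ r : R, ρ r = 0 ∧ ∃ y : ↥K, x = r • y} with hKK
    have hA : ∀ r : R, ρ r = 0 → ∀ p : ↥P, r • p ∈ Submodule.map K.subtype KK := by
      intro r hr
      have hrc : r ∈ AddSubgroup.closure {y : R | ∃ a b : R, y = a * ε * b} := (hker r).1 hr
      refine AddSubgroup.closure_induction
        (p := fun w _ => ∀ p : ↥P, w • p ∈ Submodule.map K.subtype KK) ?_ ?_ ?_ ?_ hrc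
      · rintro w ⟨a, b, rfl⟩ p
        have hsplit : a * ε * b = (a * ε) * (ε * b) := by
          rw [mul_assoc a ε (ε * b), ← mul_assoc ε ε b, hε, mul_assoc]
        rw [hsplit, mul_smul]
        have hy : (ε * b) • p ∈ K := by
          rw [hKdef, LinearMap.mem_ker, map_smul]
          exact hMkill _ (by rw [map_mul, hρε, zero_mul]) (f p)
        refine Submodule.mem_map.mpr ⟨(a * ε) • (⟨(ε * b) • p, hy⟩ : ↥K), ?_, rfl⟩
        exact Submodule.subset_span ⟨a * ε, by rw [map_mul, hρε, mul_zero],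
          ⟨(ε * b) • p, hy⟩, rfl⟩
      · intro p; rw [zero_smul]; exact Submodule.zero_mem _
      · intro x y _ _ hx hy p; rw [add_smul]; exact Submodule.add_mem _ (hx p) (hy p)
      · intro x _ hx p; rw [neg_smul]; exact Submodule.neg_mem _ (hx p)
    have hkq : ∀ x : ↥K, q x = 0 →
        x ∈ Submodule.span R {z : ↥K | ∃ r : R, ρ r = 0 ∧ ∃ y : ↥K, z = r • y} := by
      intro x hx
      have hx0 : (Submodule.Quotient.mk (x : ↥P) : ↥P ⧸ PJ) = 0 := congrArg Subtype.val hx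
      rw [Submodule.Quotient.mk_eq_zero] at hx0
      have hPJle : PJ ≤ Submodule.map K.subtype KK := by
        rw [hPJ, Submodule.span_le]
        rintro z ⟨r, hr, p, rfl⟩
        exact hA r hr p
      obtain ⟨y, hyKK, hyx⟩ := hPJle hx0
      have hyx' : y = x := Subtype.ext hyx
      rw [← hyx']
      exact hyKK
    have hQproj : Module.Projective S (↥P ⧸ PJ) :=
      proj_transfer ρ hρ hcQ hP PJ.mkQ (Submodule.Quotient.mk_surjective PJ)
        (fun p hp => (Submodule.Quotient.mk_eq_zero PJ).mp hp)
    have hKerproj : Module.Projective S ↥(LinearMap.ker f'') :=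
      proj_transfer ρ hρ hcKer hK q hqsurj hkq
    exact (pdLE_one S _).mpr ⟨ModuleCat.of S (↥P ⧸ PJ), f'', hQproj, hf''surj, hKerproj⟩
  · -- injective dimension case
    right
    obtain ⟨I, g, hI, hg, hC⟩ := (idLE_one R _).mp hid
    set I'sub : Submodule R ↥I :=
      { carrier := {x : ↥I | ∀ r : R, ρ r = 0 → r • x = 0}
        add_mem' := fun hx hy r hr => by rw [smul_add, hx r hr, hy r hr, add_zero]
        zero_mem' := fun r hr => smul_zero r
        smul_mem' := fun c x hx r hr => by
          rw [← mul_smul]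
          exact hx _ (by rw [map_mul, hr, zero_mul]) } with hI'sub
    have killI' : ∀ r : R, ρ r = 0 → ∀ x : ↥I'sub, r • x = 0 :=
      fun r hr x => Subtype.ext (x.2 r hr)
    letI instI'S : Module S ↥I'sub := modS ρ hρ killI'
    have hcI' : ∀ (r : R) (x : ↥I'sub), ρ r • x = r • x := modS_compat ρ hρ killI'
    have hgmem : ∀ m : M, g m ∈ I'sub := by
      intro m r hr
      rw [← map_smul, hMkill r hr m, map_zero]
    set g' : M →ₗ[R] ↥I'sub := LinearMap.codRestrict I'sub g hgmem with hg'def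
    set g'' : M →ₗ[S] ↥I'sub := mapS ρ hρ hcM hcI' g' with hg''def
    have hg''inj : Function.Injective ⇑g'' := by
      intro a b hab
      exact hg (congrArg Subtype.val hab)
    have hinjI' : Module.Injective S ↥I'sub :=
      inj_transfer ρ hρ hcI' hI I'sub.subtype (Submodule.injective_subtype I'sub)
        (fun x hx => ⟨⟨x, hx⟩, rfl⟩)
    letI instDR : Module R (↥I'sub ⧸ LinearMap.range g'') := Module.compHom _ ρ
    have hcD : ∀ (r : R) (d : ↥I'sub ⧸ LinearMap.range g''), ρ r • d = r • d := fun _ _ => rfl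
    set θ : ↥I'sub →ₗ[R] (↥I ⧸ LinearMap.range g) :=
      (LinearMap.range g).mkQ.comp I'sub.subtype with hθdef
    set mkD : ↥I'sub →ₗ[R] (↥I'sub ⧸ LinearMap.range g'') :=
      mapR ρ hcI' hcD (LinearMap.range g'').mkQ with hmkDdef
    have hmkDsurj : Function.Surjective ⇑mkD :=
      Submodule.Quotient.mk_surjective _
    have h0 : ∀ x : ↥I'sub, mkD x = 0 → θ x = 0 := by
      intro x hx
      have hx' : (Submodule.Quotient.mk x : ↥I'sub ⧸ LinearMap.range g'') = 0 := hx
      rw [Submodule.Quotient.mk_eq_zero] at hx'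
      obtain ⟨m, rfl⟩ := hx'
      show Submodule.Quotient.mk ((g'' m : ↥I'sub) : ↥I) = (0 : ↥I ⧸ LinearMap.range g)
      rw [Submodule.Quotient.mk_eq_zero]
      exact ⟨m, rfl⟩
    obtain ⟨ιD, hιD⟩ := descend mkD hmkDsurj θ h0
    have hinjD : Function.Injective ⇑ιD := by
      have key0 : ∀ d, ιD d = 0 → d = 0 := by
        intro d hd
        obtain ⟨x, rfl⟩ := hmkDsurj d
        have hθx : θ x = 0 := by rw [← hιD x]; exact hd
        have hx2 : (x : ↥I) ∈ LinearMap.range g := by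
          have : (Submodule.Quotient.mk (x : ↥I) : ↥I ⧸ LinearMap.range g) = 0 := hθx
          rwa [Submodule.Quotient.mk_eq_zero] at this
        obtain ⟨m, hm⟩ := hx2
        have hxm : g'' m = x := Subtype.ext hm
        show (Submodule.Quotient.mk x : ↥I'sub ⧸ LinearMap.range g'') = 0
        rw [Submodule.Quotient.mk_eq_zero]
        exact ⟨m, hxm⟩
      intro d1 d2 h12
      have := key0 (d1 - d2) (by rw [map_sub, h12, sub_self])
      exact sub_eq_zero.mp this
    have hrangeD : ∀ c : ↥I ⧸ LinearMap.range g,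
        (∀ r : R, ρ r = 0 → r • c = 0) → ∃ d, ιD d = c := by
      intro c hc
      obtain ⟨x0, rfl⟩ := Submodule.Quotient.mk_surjective _ c
      have hx : ∀ r : R, ρ r = 0 → r • x0 ∈ LinearMap.range g := by
        intro r hr
        have := hc r hr
        rw [← Submodule.Quotient.mk_smul] at this
        rwa [Submodule.Quotient.mk_eq_zero] at this
      have hx0kill : ∀ r : R, ρ r = 0 → r • x0 = 0 := by
        intro r hr
        have hrc : r ∈ AddSubgroup.closure {y : R | ∃ a b : R, y = a * ε * b} := (hker r).1 hr
        refine AddSubgroup.closure_induction (p := fun w _ => w • x0 = 0) ?_ ?_ ?_ ?_ hrc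
        · rintro w ⟨a, b, rfl⟩
          show (a * ε * b) • x0 = 0
          have hsplit : a * ε * b = (a * ε) * (ε * b) := by
            rw [mul_assoc a ε (ε * b), ← mul_assoc ε ε b, hε, mul_assoc]
          rw [hsplit, mul_smul]
          obtain ⟨m, hm⟩ := hx (ε * b) (by rw [map_mul, hρε, zero_mul])
          rw [← hm, ← map_smul, hMkill _ (by rw [map_mul, hρε, mul_zero]) m, map_zero]
        · show (0 : R) • x0 = 0
          rw [zero_smul]
        · intro x y _ _ hx1 hy1
          show (x + y) • x0 = 0
          rw [add_smul, hx1, hy1, add_zero]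
        · intro x _ hx1
          show (-x) • x0 = 0
          rw [neg_smul, hx1, neg_zero]
      refine ⟨mkD ⟨x0, hx0kill⟩, ?_⟩
      rw [hιD]
      rfl
    have hinjD2 : Module.Injective S (↥I'sub ⧸ LinearMap.range g'') :=
      inj_transfer ρ hρ hcD hC ιD hinjD hrangeD
    exact (idLE_one S _).mpr ⟨ModuleCat.of S ↥I'sub, g'', hinjI', hg''inj, hinjD2⟩

end Stmt8Aux

/-- Let `A` be a finite-dimensional `k`-algebra which is shod (every
indecomposable finitely generated right `A`-module has projective or injective dimension at
most one).  Then for any idempotent `e ∈ A`, the quotient `B = A/AeA` (encoded by a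
surjective ring homomorphism with kernel the two-sided ideal generated by `e`) is shod. -/
theorem stmt8 (k A B : Type) [Field k] [Ring A] [Algebra k A] [FiniteDimensional k A]
    [Ring B] (π : A →+* B) (hπ : Function.Surjective π)
    (e : A) (he : e * e = e)
    (hker : ∀ x : A, π x = 0 ↔ x ∈ AddSubgroup.closure {y : A | ∃ a b : A, y = a * e * b})
    (hshod : Shod Aᵐᵒᵖ) :
    Shod Bᵐᵒᵖ := by
  set ρ : Aᵐᵒᵖ →+* Bᵐᵒᵖ := RingHom.op π with hρdef
  have hρ : Function.Surjective ⇑ρ := by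
    intro y
    obtain ⟨a, ha⟩ := hπ (unop y)
    exact ⟨op a, by show op (π a) = y; rw [ha, op_unop]⟩
  have hε : (op e : Aᵐᵒᵖ) * op e = op e := by rw [← op_mul, he]
  have hkerop : ∀ x : Aᵐᵒᵖ, ρ x = 0 ↔
      x ∈ AddSubgroup.closure {y : Aᵐᵒᵖ | ∃ a b : Aᵐᵒᵖ, y = a * op e * b} := by
    have dir1 : ∀ z : A, z ∈ AddSubgroup.closure {y : A | ∃ a b : A, y = a * e * b} →
        op z ∈ AddSubgroup.closure {y : Aᵐᵒᵖ | ∃ a b : Aᵐᵒᵖ, y = a * op e * b} := by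
      intro z hz
      refine AddSubgroup.closure_induction
        (p := fun w _ => op w ∈ AddSubgroup.closure {y : Aᵐᵒᵖ | ∃ a b : Aᵐᵒᵖ, y = a * op e * b})
        ?_ ?_ ?_ ?_ hz
      · rintro w ⟨a, b, rfl⟩
        exact AddSubgroup.subset_closure ⟨op b, op a, by rw [op_mul, op_mul, ← mul_assoc]⟩
      · show op (0 : A) ∈ _
        rw [op_zero]; exact AddSubgroup.zero_mem _
      · intro x y _ _ hx hy
        show op (x + y) ∈ _
        rw [op_add]; exact AddSubgroup.add_mem _ hx hy
      · intro x _ hx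
        show op (-x) ∈ _
        rw [op_neg]; exact AddSubgroup.neg_mem _ hx
    have dir2 : ∀ w : Aᵐᵒᵖ, w ∈ AddSubgroup.closure {y : Aᵐᵒᵖ | ∃ a b : Aᵐᵒᵖ, y = a * op e * b} →
        unop w ∈ AddSubgroup.closure {y : A | ∃ a b : A, y = a * e * b} := by
      intro w hw
      refine AddSubgroup.closure_induction
        (p := fun w _ => unop w ∈ AddSubgroup.closure {y : A | ∃ a b : A, y = a * e * b})
        ?_ ?_ ?_ ?_ hw
      · rintro w ⟨a, b, rfl⟩
        refine AddSubgroup.subset_closure ⟨unop b, unop a, ?_⟩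
        show unop (a * op e * b) = _
        rw [unop_mul, unop_mul, unop_op, ← mul_assoc]
      · show unop (0 : Aᵐᵒᵖ) ∈ _
        rw [unop_zero]; exact AddSubgroup.zero_mem _
      · intro x y _ _ hx hy
        show unop (x + y) ∈ _
        rw [unop_add]; exact AddSubgroup.add_mem _ hx hy
      · intro x _ hx
        show unop (-x) ∈ _
        rw [unop_neg]; exact AddSubgroup.neg_mem _ hx
    intro x
    constructor
    · intro hx
      have hπx : π (unop x) = 0 := by
        have : op (π (unop x)) = (0 : Bᵐᵒᵖ) := hx
        rwa [op_eq_zero_iff] at this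
      have := dir1 (unop x) ((hker (unop x)).mp hπx)
      rwa [op_unop] at this
    · intro hx
      have := dir2 x hx
      have hπx : π (unop x) = 0 := (hker (unop x)).mpr this
      show op (π (unop x)) = 0
      rw [hπx, op_zero]
  exact Stmt8Aux.shod_transfer ρ hρ (op e) hε hkerop hshod
end

section
/- Let H be a hereditary abelian category and E ∈ H. Then the abelian subcategory E^⊥[0,1] = {X : Hom_H(E,X) = 0 = Ext¹_H(E,X)} is itself hereditary: for all X, Y in E^⊥[0,1], Ext²_{E^⊥[0,1]}(X, Y) = 0, where Ext² is computed by Yoneda 2-extensions inside the subcategory. -/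
open CategoryTheory CategoryTheory.Limits CategoryTheory.Abelian
open CategoryTheory.Pretriangulated

universe w' v' u'

/-- Auxiliary statement: in a hereditary abelian category (`Ext² = 0`), every Yoneda
2-extension `0 → Y → E₁ → E₂ → X → 0` can be trivialized: there is a short exact
sequence `0 → E₁ → F → X → 0` and a morphism `g : F ⟶ E₂` splicing the 2-extension. -/
theorem stmt10_aux {C : Type u'} [Category.{v'} C] [Abelian C] [HasExt.{w'} C]
    (hered : ∀ X Y : C, Subsingleton (Ext X Y 2))
    {X Y E₁ E₂ : C}
    (a : Y ⟶ E₁) (f : E₁ ⟶ E₂) (b : E₂ ⟶ X) [Mono a] [Epi b]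
    (w₁ : a ≫ f = 0) (w₂ : f ≫ b = 0)
    (h₁ : (ShortComplex.mk a f w₁).Exact) (h₂ : (ShortComplex.mk f b w₂).Exact) :
    ∃ (F : C) (i : E₁ ⟶ F) (p : F ⟶ X) (w : i ≫ p = 0),
      (ShortComplex.mk i p w).ShortExact ∧
      ∃ g : F ⟶ E₂, i ≫ g = f ∧ g ≫ b = p := by
  classical
  -- the image `M` of `f`, as the kernel of `b`
  set M : C := kernel b with hM
  set m : M ⟶ E₂ := kernel.ι b with hm
  set π : E₁ ⟶ M := kernel.lift b f w₂ with hπ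
  have hπm : π ≫ m = f := kernel.lift_ι _ _ _
  haveI : Epi π :=
    (ShortComplex.exact_iff_epi_kernel_lift (ShortComplex.mk f b w₂)).1 h₂
  have waπ : a ≫ π = 0 := by
    rw [← cancel_mono m, Category.assoc, hπm, w₁, zero_comp]
  -- the two short exact sequences
  have hS₁ : (ShortComplex.mk a π waπ).ShortExact := by
    refine ⟨ShortComplex.exact_of_f_is_kernel _ ?_⟩
    refine KernelFork.IsLimit.ofι a waπ
      (fun k hk => h₁.lift k ?_) (fun k hk => h₁.lift_f k _) ?_
    · show k ≫ f = 0
      rw [← hπm, ← Category.assoc, hk, zero_comp]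
    · intro A k hk m' hm'
      rw [← cancel_mono a, hm', h₁.lift_f]
  have hS₂ : (ShortComplex.mk m b (kernel.condition b)).ShortExact :=
    ⟨ShortComplex.exact_of_f_is_kernel _ (kernelIsKernel b)⟩
  -- lift the extension class of `hS₂` along `π`, using `Ext² = 0`
  have hvanish : hS₂.extClass.comp hS₁.extClass rfl = 0 := by
    have := hered X Y
    exact Subsingleton.elim _ _
  obtain ⟨x₂, hx₂⟩ := Ext.covariant_sequence_exact₃ X hS₁ hS₂.extClass rfl hvanish
  -- pass to the derived category
  letI : HasDerivedCategory C := HasDerivedCategory.standard C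
  have h' : x₂.hom ≫ ((DerivedCategory.singleFunctor C 0).map π)⟦(1 : ℤ)⟧' =
      hS₂.singleδ := by
    have h0 : (x₂.comp (Ext.mk₀ π) (add_zero 1)).hom = hS₂.extClass.hom := by rw [hx₂]
    rw [Ext.comp_hom, Ext.mk₀_hom, ShiftedHom.comp_mk₀,
      ShortComplex.ShortExact.extClass_hom] at h0
    exact h0
  obtain ⟨Z, u, v, hT⟩ := Pretriangulated.distinguished_cocone_triangle₂
    (x₂.hom : (DerivedCategory.singleFunctor C 0).obj X ⟶
      ((DerivedCategory.singleFunctor C 0).obj E₁)⟦(1 : ℤ)⟧)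
  obtain ⟨γ, hγ₁, hγ₂⟩ := Pretriangulated.complete_distinguished_triangle_morphism₂
    _ _ hT hS₂.singleTriangle_distinguished
    ((DerivedCategory.singleFunctor C 0).map π) (𝟙 _) (by
      dsimp
      refine Eq.trans ?_ (Category.id_comp _).symm
      exact h')
  dsimp at hγ₁ hγ₂
  change Z ⟶ (DerivedCategory.singleFunctor C 0).obj E₂ at γ
  replace hγ₁ : u ≫ γ = (DerivedCategory.singleFunctor C 0).map π ≫
      (DerivedCategory.singleFunctor C 0).map m := hγ₁
  replace hγ₂ : v = γ ≫ (DerivedCategory.singleFunctor C 0).map b :=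
    (Category.comp_id _).symm.trans hγ₂
  -- hγ₁ : u ≫ γ = single.map π ≫ single.map m ; hγ₂ : v = γ ≫ single.map b
  -- homology computations
  have ν : DerivedCategory.singleFunctor C 0 ⋙ DerivedCategory.homologyFunctor C 0 ≅ 𝟭 C :=
    Functor.isoWhiskerRight ((SingleFunctors.evaluation _ _ 0).mapIso
        (DerivedCategory.singleFunctorsPostcompQIso C)) (DerivedCategory.homologyFunctor C 0)
      ≪≫ Functor.associator _ _ _
      ≪≫ Functor.isoWhiskerLeft (CochainComplex.singleFunctor C 0)
          (DerivedCategory.homologyFunctorFactors C 0)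
      ≪≫ HomologicalComplex.homologyFunctorSingleIso C (ComplexShape.up ℤ) 0
  have hz : ∀ (A : C) (n : ℤ), n ≠ 0 →
      IsZero ((DerivedCategory.homologyFunctor C n).obj
        ((DerivedCategory.singleFunctor C 0).obj A)) := by
    intro A n hn
    refine IsZero.of_iso (HomologicalComplex.isZero_single_obj_homology _ 0 A n hn)
      (((DerivedCategory.homologyFunctor C n).mapIso
        ((((SingleFunctors.evaluation _ _ 0).mapIso
          (DerivedCategory.singleFunctorsPostcompQIso C))).app A))
        ≪≫ (DerivedCategory.homologyFunctorFactors C n).app _)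
  set H0 := DerivedCategory.homologyFunctor C 0 with hH0
  have h12 : u ≫ v = 0 := Pretriangulated.comp_distTriang_mor_zero₁₂ _ hT
  have hmono : Mono (H0.map u) := by
    have := (DerivedCategory.HomologySequence.mono_homologyMap_mor₁_iff
      (Pretriangulated.Triangle.mk u v x₂.hom) hT (-1) 0 (by omega)).2
      ((hz X (-1) (by omega)).eq_of_src _ _)
    exact this
  have hepi : Epi (H0.map v) := by
    have := (DerivedCategory.HomologySequence.epi_homologyMap_mor₂_iff
      (Pretriangulated.Triangle.mk u v x₂.hom) hT 0 1 (by omega)).2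
      ((hz E₁ 1 (by omega)).eq_of_tgt _ _)
    exact this
  have hw' : H0.map u ≫ H0.map v = 0 := by
    rw [← Functor.map_comp, h12, Functor.map_zero]
  have hex : (ShortComplex.mk (H0.map u) (H0.map v) hw').Exact :=
    DerivedCategory.HomologySequence.exact₂ _ hT 0
  have hnatf : H0.map ((DerivedCategory.singleFunctor C 0).map f) ≫ ν.hom.app E₂ =
      ν.hom.app E₁ ≫ f := by
    have := ν.hom.naturality f
    dsimp at this
    exact this
  have hnatb : H0.map ((DerivedCategory.singleFunctor C 0).map b) ≫ ν.hom.app X =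
      ν.hom.app E₂ ≫ b := by
    have := ν.hom.naturality b
    dsimp at this
    exact this
  have hufγ : H0.map u ≫ H0.map γ = H0.map ((DerivedCategory.singleFunctor C 0).map f) := by
    rw [← Functor.map_comp, hγ₁, ← Functor.map_comp, hπm]
  -- the object `F` and the short exact sequence
  refine ⟨H0.obj Z,
    (ν.app E₁).inv ≫ H0.map u,
    H0.map v ≫ (ν.app X).hom, ?_, ?_, H0.map γ ≫ (ν.app E₂).hom, ?_, ?_⟩
  · rw [Category.assoc, ← Category.assoc (H0.map u), hw', zero_comp, comp_zero]
  · refine ⟨?_⟩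
    have e : ShortComplex.mk (H0.map u) (H0.map v) hw' ≅
        ShortComplex.mk ((ν.app E₁).inv ≫ H0.map u) (H0.map v ≫ (ν.app X).hom)
          (by rw [Category.assoc, ← Category.assoc (H0.map u), hw', zero_comp, comp_zero]) :=
      ShortComplex.isoMk (ν.app E₁) (Iso.refl _) (ν.app X) (by simp) (by simp)
    exact (ShortComplex.exact_iff_of_iso e).1 hex
  · -- i ≫ g = f
    rw [Category.assoc, ← Category.assoc (H0.map u), hufγ, Iso.app_inv, Iso.app_hom, hnatf]
    simp
  · -- g ≫ b = p
    rw [Category.assoc, Iso.app_hom, ← hnatb, Iso.app_hom, ← Category.assoc,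
      ← Functor.map_comp, ← hγ₂]

/-- Let `H` be a hereditary abelian category (`Ext²` vanishes identically)
and `E ∈ H`.  Then the abelian subcategory `E^⊥[0,1]` is itself hereditary: every Yoneda
2-extension `0 → Y → E₁ → E₂ → X → 0` with all terms in `E^⊥[0,1]` is trivial inside the
subcategory, i.e. there exist `F ∈ E^⊥[0,1]`, a short exact sequence `0 → E₁ → F → X → 0`
and a morphism `g : F ⟶ E₂` splicing the given 2-extension trivially. -/
theorem stmt10 (k : Type) [Field k] (H : Type) [Category H] [Abelian H] [Linear k H]
    [HasExt.{0} H]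
    (hfin : ∀ X Y : H, Module.Finite k (X ⟶ Y))
    (hered : ∀ X Y : H, Subsingleton (Ext X Y 2))
    (E : H)
    (X Y E₁ E₂ : H)
    (hX : (∀ g : E ⟶ X, g = 0) ∧ Subsingleton (Ext E X 1))
    (hY : (∀ g : E ⟶ Y, g = 0) ∧ Subsingleton (Ext E Y 1))
    (hE₁ : (∀ g : E ⟶ E₁, g = 0) ∧ Subsingleton (Ext E E₁ 1))
    (hE₂ : (∀ g : E ⟶ E₂, g = 0) ∧ Subsingleton (Ext E E₂ 1))
    -- an exact sequence `0 → Y → E₁ → E₂ → X → 0`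
    (a : Y ⟶ E₁) (f : E₁ ⟶ E₂) (b : E₂ ⟶ X) [Mono a] [Epi b]
    (w₁ : a ≫ f = 0) (w₂ : f ≫ b = 0)
    (h₁ : (ShortComplex.mk a f w₁).Exact) (h₂ : (ShortComplex.mk f b w₂).Exact) :
    ∃ (F : H), ((∀ g : E ⟶ F, g = 0) ∧ Subsingleton (Ext E F 1)) ∧
      ∃ (i : E₁ ⟶ F) (p : F ⟶ X) (w : i ≫ p = 0),
        (ShortComplex.mk i p w).ShortExact ∧
        ∃ g : F ⟶ E₂, i ≫ g = f ∧ g ≫ b = p := by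
  obtain ⟨F, i, p, w, hse, g, hig, hgb⟩ := stmt10_aux hered a f b w₁ w₂ h₁ h₂
  haveI := hse.mono_f
  haveI := hse.epi_g
  refine ⟨F, ⟨?_, ?_⟩, i, p, w, hse, g, hig, hgb⟩
  · -- `Hom(E, F) = 0`
    intro q
    have hqp : q ≫ p = 0 := hX.1 (q ≫ p)
    have hlift : hse.exact.lift q hqp ≫ i = q := hse.exact.lift_f q hqp
    rw [← hlift, hE₁.1 (hse.exact.lift q hqp), zero_comp]
  · -- `Ext¹(E, F) = 0`
    have hz1 : ∀ ξ : Ext E F 1, ξ = 0 := by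
      intro ξ
      have h0 : ξ.comp (Ext.mk₀ p) (add_zero 1) = 0 := by
        have := hX.2
        exact Subsingleton.elim _ _
      obtain ⟨η, hη⟩ := Ext.covariant_sequence_exact₂ E hse ξ h0
      have hη0 : η = 0 := by
        have := hE₁.2
        exact Subsingleton.elim _ _
      rw [← hη, hη0, Ext.zero_comp]
    exact ⟨fun α β => by rw [hz1 α, hz1 β]⟩
end

section
/- Let T be a triangulated category and X, Y full subcategories. If X and Y are both contravariantly finite in T, then the extension category X * Y is contravariantly finite in T. -/
open CategoryTheory CategoryTheory.Limits CategoryTheory.Pretriangulated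

/-- Let `T` be a triangulated category and `X`, `Y` full subcategories
(given by predicates `P`, `Q`).  If `P` and `Q` are contravariantly finite in `T`, then the
extension subcategory `P * Q` (objects `E` admitting a distinguished triangle
`X → E → Y → X[1]` with `X ∈ P`, `Y ∈ Q`) is contravariantly finite in `T`. -/
theorem stmt16 (T : Type) [Category T] [Preadditive T] [HasZeroObject T]
    [HasShift T ℤ] [∀ n : ℤ, (CategoryTheory.shiftFunctor T n).Additive] [Pretriangulated T]
    (P Q : T → Prop)
    (hP : ∀ Z : T, ∃ (X : T) (f : X ⟶ Z), P X ∧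
      ∀ (X' : T), P X' → ∀ g : X' ⟶ Z, ∃ h : X' ⟶ X, h ≫ f = g)
    (hQ : ∀ Z : T, ∃ (X : T) (f : X ⟶ Z), Q X ∧
      ∀ (X' : T), Q X' → ∀ g : X' ⟶ Z, ∃ h : X' ⟶ X, h ≫ f = g) :
    ∀ Z : T, ∃ (E : T) (f : E ⟶ Z),
      -- `E ∈ P * Q`
      (∃ (X Y : T) (u : X ⟶ E) (v : E ⟶ Y) (w : Y ⟶ X⟦(1 : ℤ)⟧),
        (Triangle.mk u v w ∈ distTriang T) ∧ P X ∧ Q Y) ∧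
      -- `f` is a right `P * Q`-approximation of `Z`
      (∀ E' : T,
        (∃ (X Y : T) (u : X ⟶ E') (v : E' ⟶ Y) (w : Y ⟶ X⟦(1 : ℤ)⟧),
          (Triangle.mk u v w ∈ distTriang T) ∧ P X ∧ Q Y) →
        ∀ g : E' ⟶ Z, ∃ h : E' ⟶ E, h ≫ f = g) := by
  intro Z
  -- right `P`-approximation of `Z`
  obtain ⟨X₀, p, hX₀, hp⟩ := hP Z
  -- cone of `p` : triangle `X₀ → Z → C → X₀⟦1⟧`
  obtain ⟨C, c, δ, hTZ⟩ := distinguished_cocone_triangle p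
  -- right `Q`-approximation of `C`
  obtain ⟨Y₀, q, hY₀, hq⟩ := hQ C
  -- triangle `X₀ → E → Y₀ → X₀⟦1⟧` with third map `q ≫ δ`
  obtain ⟨E, uE, vE, hTE⟩ := distinguished_cocone_triangle₂ (q ≫ δ)
  -- complete `(𝟙 X₀, q)` to a triangle morphism, getting `e : E ⟶ Z`
  obtain ⟨e, he₁, he₂⟩ := complete_distinguished_triangle_morphism₂ _ _ hTE hTZ (𝟙 X₀) q
    (by show (q ≫ δ) ≫ (shiftFunctor T (1 : ℤ)).map (𝟙 X₀) = q ≫ δ; rw [CategoryTheory.Functor.map_id, Category.comp_id])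
  change E ⟶ Z at e
  change uE ≫ e = 𝟙 X₀ ≫ p at he₁
  change vE ≫ q = e ≫ c at he₂
  rw [Category.id_comp] at he₁
  have hpc : p ≫ c = 0 := comp_distTriang_mor_zero₁₂ _ hTZ
  have hcδ : c ≫ δ = 0 := comp_distTriang_mor_zero₂₃ _ hTZ
  refine ⟨E, e, ⟨X₀, Y₀, uE, vE, q ≫ δ, hTE, hX₀, hY₀⟩, ?_⟩
  rintro E' ⟨X', Y', u', v', w', hT', hX', hY'⟩ g
  -- `u' ≫ g` factors through `p` since `P X'`
  obtain ⟨a, ha⟩ := hp X' hX' (u' ≫ g)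
  -- hence `u' ≫ (g ≫ c) = 0`
  have h1 : u' ≫ (g ≫ c) = 0 := by
    rw [← Category.assoc, ← ha, Category.assoc, hpc, comp_zero]
  -- so `g ≫ c` factors through `v'` : `g ≫ c = v' ≫ b`
  obtain ⟨b, hb⟩ := Triangle.yoneda_exact₂ _ hT' (g ≫ c) h1
  change Y' ⟶ C at b
  change g ≫ c = v' ≫ b at hb
  -- `b` factors through the `Q`-approximation `q` : `d ≫ q = b`
  obtain ⟨d, hd⟩ := hq Y' hY' b
  -- `v' ≫ (d ≫ (q ≫ δ)) = 0`
  have h2 : v' ≫ (d ≫ (q ≫ δ)) = 0 := by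
    rw [← Category.assoc, ← Category.assoc, Category.assoc v' d q, hd, ← hb,
      Category.assoc, hcδ, comp_zero]
  -- so `d ≫ (q ≫ δ)` factors through `w'` : `= w' ≫ s`
  obtain ⟨s, hs⟩ := Triangle.yoneda_exact₃ _ hT' (d ≫ (q ≫ δ)) h2
  change X'⟦(1 : ℤ)⟧ ⟶ X₀⟦(1 : ℤ)⟧ at s
  change d ≫ (q ≫ δ) = w' ≫ s at hs
  -- write `s = ā⟦1⟧'`
  set abar : X' ⟶ X₀ := (shiftFunctor T (1 : ℤ)).preimage s with habar
  have hsa : s = abar⟦(1 : ℤ)⟧' := ((shiftFunctor T (1 : ℤ)).map_preimage s).symm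
  -- complete `(abar, d)` to a triangle morphism, getting `h : E' ⟶ E`
  obtain ⟨h, hh₁, hh₂⟩ := complete_distinguished_triangle_morphism₂ _ _ hT' hTE abar d
    (by show w' ≫ abar⟦(1 : ℤ)⟧' = d ≫ (q ≫ δ); rw [← hsa]; exact hs.symm)
  change E' ⟶ E at h
  change u' ≫ h = abar ≫ uE at hh₁
  change v' ≫ d = h ≫ vE at hh₂
  -- `(h ≫ e - g) ≫ c = 0`
  have h3 : (h ≫ e - g) ≫ c = 0 := by
    rw [Preadditive.sub_comp, Category.assoc, ← he₂, ← Category.assoc, ← hh₂,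
      Category.assoc, hd, ← hb, sub_self]
  -- so `h ≫ e - g = x ≫ p`
  obtain ⟨x, hx⟩ := Triangle.coyoneda_exact₂ _ hTZ (h ≫ e - g) h3
  change E' ⟶ X₀ at x
  change h ≫ e - g = x ≫ p at hx
  refine ⟨h - x ≫ uE, ?_⟩
  rw [Preadditive.sub_comp, Category.assoc, he₁]
  rw [sub_eq_iff_eq_add] at hx ⊢
  rw [hx]; abel
end
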